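/- An action a* is strictly elicitable (there is a convex menu G satisfying participation and all incentive constraints with strict inequality for a ≠ a*) if and only if (p_{a*}, c_{a*}) is a lower vertex of the convex hull of {(p_a, c_a) : a ∈ A}. -/

import Mathlib

open Finset

/-- An action `a*` is strictly elicitable (some convex menu satisfies participation
and all incentive constraints strictly for `a ≠ a*`) if and only if
`(p_{a*}, c_{a*})` is a lower vertex of the convex hull of `{(p_a, c_a) : a ∈ A}`. -/
theorem strictly_elicitable_iff_lower_vertex {A Ω : Type*} [Fintype A] [Fintype Ω]
    (pdist : A → Ω → ℝ) (hp : ∀ a, pdist a ∈ stdSimplex ℝ Ω)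
    (cost : A → ℝ) (hcost : ∀ a, 0 ≤ cost a)
    (astar : A) :
    (∃ G : (Ω → ℝ) → ℝ, ConvexOn ℝ (convexHull ℝ (Set.range pdist)) G ∧
      0 ≤ G (pdist astar) - cost astar ∧
      (∀ a, a ≠ astar →
        G (pdist a) - cost a < G (pdist astar) - cost astar))
    ↔
    (∀ lam : A → ℝ, (∀ a, 0 ≤ lam a) → lam astar = 0 → (∑ a, lam a) = 1 →
      (∀ ω, ∑ a, lam a * pdist a ω = pdist astar ω) →
      cost astar < ∑ a, lam a * cost a) := by
  constructor
  · rintro ⟨G, hGconv, -, hGstrict⟩ lam hlam0 hlamstar hlam1 hlamp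
    have hsum : (∑ a, lam a • pdist a) = pdist astar := by
      funext ω
      simpa [Finset.sum_apply] using hlamp ω
    have hjensen : G (pdist astar) ≤ ∑ a, lam a * G (pdist a) := by
      rw [← hsum]
      exact hGconv.map_sum_le (fun a _ => hlam0 a) hlam1
        (fun a _ => subset_convexHull ℝ _ (Set.mem_range_self a))
    obtain ⟨a0, -, ha0⟩ : ∃ a ∈ Finset.univ, 0 < lam a := by
      by_contra h
      push_neg at h
      have : (∑ a, lam a) = 0 :=
        Finset.sum_eq_zero fun a ha => le_antisymm (h a ha) (hlam0 a)
      rw [hlam1] at this; norm_num at this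
    have ha0ne : a0 ≠ astar := by
      rintro rfl; rw [hlamstar] at ha0; exact lt_irrefl _ ha0
    have hstrict : (∑ a, lam a * (G (pdist a) - cost a)) <
        ∑ a, lam a * (G (pdist astar) - cost astar) := by
      refine Finset.sum_lt_sum (fun a _ => ?_) ⟨a0, Finset.mem_univ a0, ?_⟩
      · rcases eq_or_ne a astar with rfl | hne
        · simp [hlamstar]
        · exact mul_le_mul_of_nonneg_left (le_of_lt (hGstrict a hne)) (hlam0 a)
      · exact (mul_lt_mul_iff_right₀ ha0).2 (hGstrict a0 ha0ne)
    have hconst : (∑ a, lam a * (G (pdist astar) - cost astar))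
        = G (pdist astar) - cost astar := by
      rw [← Finset.sum_mul, hlam1, one_mul]
    have hexp : (∑ a, lam a * (G (pdist a) - cost a))
        = (∑ a, lam a * G (pdist a)) - ∑ a, lam a * cost a := by
      rw [← Finset.sum_sub_distrib]
      exact Finset.sum_congr rfl fun a _ => by ring
    rw [hconst, hexp] at hstrict
    linarith
  · intro hvertex
    classical
    set q : Option A → (Ω → ℝ) × ℝ := fun i =>
      match i with
      | none => (0, 1)
      | some a => if a = astar then (0, 1)
          else (pdist a - pdist astar, cost a - cost astar)
      with hq
    have hq_none : q none = (0, 1) := rfl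
    have hq_star : q (some astar) = (0, 1) := by simp [hq]
    have hq_some : ∀ a, a ≠ astar →
        q (some a) = (pdist a - pdist astar, cost a - cost astar) := by
      intro a ha; simp [hq, ha]
    -- (0,0) is not in the convex hull of the range of q
    have hzero : (0 : (Ω → ℝ) × ℝ) ∉ convexHull ℝ (Set.range q) := by
      intro h0
      rw [convexHull_range_eq_exists_affineCombination] at h0
      obtain ⟨s, w, hw0, hw1, hws⟩ := h0
      rw [s.affineCombination_eq_linear_combination _ _ hw1] at hws
      set μ : Option A → ℝ := fun i => if i ∈ s then w i else 0 with hμ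
      have hμ0 : ∀ i, 0 ≤ μ i := by
        intro i; by_cases hi : i ∈ s <;> simp [hμ, hi, hw0 i]
      have hμsum : (∑ i, μ i) = 1 := by
        rw [← hw1, hμ]
        simp [Finset.sum_ite_mem]
      have hμvec : (∑ i, μ i • q i) = 0 := by
        rw [← hws]
        have : ∀ i, μ i • q i = if i ∈ s then w i • q i else 0 := by
          intro i; by_cases hi : i ∈ s <;> simp [hμ, hi]
        simp_rw [this]
        simp [Finset.sum_ite_mem]
      set lam' : A → ℝ := fun a => if a = astar then 0 else μ (some a) with hlam'
      have hlam'0 : ∀ a, 0 ≤ lam' a := by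
        intro a; by_cases h : a = astar <;> simp [hlam', h, hμ0]
      -- second components
      have hsnd : μ none + (μ (some astar) + ∑ a, lam' a * (cost a - cost astar)) = 0 := by
        have h2 := congrArg Prod.snd hμvec
        rw [Prod.snd_sum] at h2
        simp only [Prod.smul_snd, smul_eq_mul] at h2
        rw [Fintype.sum_option] at h2
        rw [hq_none] at h2
        have he : ∀ a, μ (some a) * (q (some a)).2
            = (if a = astar then μ (some astar) else 0) + lam' a * (cost a - cost astar) := by
          intro a
          by_cases h : a = astar
          · subst h; rw [hq_star]; simp [hlam']
          · rw [hq_some a h]; simp [hlam', h]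
        simp_rw [he] at h2
        rw [Finset.sum_add_distrib, Finset.sum_ite_eq' Finset.univ astar] at h2
        simpa using h2
      -- first components
      have hfst : ∀ ω, (∑ a, lam' a * (pdist a ω - pdist astar ω)) = 0 := by
        intro ω
        have h1 := congrArg Prod.fst hμvec
        rw [Prod.fst_sum] at h1
        have h1ω := congrFun h1 ω
        rw [Finset.sum_apply] at h1ω
        simp only [Prod.smul_fst, Pi.smul_apply, smul_eq_mul] at h1ω
        rw [Fintype.sum_option] at h1ω
        have he : ∀ a, μ (some a) * (q (some a)).1 ω
            = lam' a * (pdist a ω - pdist astar ω) := by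
          intro a
          by_cases h : a = astar
          · subst h; rw [hq_star]; simp [hlam']
          · rw [hq_some a h]; simp [hlam', h]
        simp_rw [he] at h1ω
        simpa [hq_none] using h1ω
      -- total mass of lam'
      have hmass : μ none + (μ (some astar) + ∑ a, lam' a) = 1 := by
        rw [Fintype.sum_option] at hμsum
        have he : ∀ a, μ (some a) = (if a = astar then μ (some astar) else 0) + lam' a := by
          intro a; by_cases h : a = astar
          · subst h; simp [hlam']
          · simp [hlam', h]
        rw [show (∑ a, μ (some a)) = ∑ a, ((if a = astar then μ (some astar) else 0) + lam' a)
          from Finset.sum_congr rfl fun a _ => he a] at hμsum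
        rw [Finset.sum_add_distrib, Finset.sum_ite_eq' Finset.univ astar] at hμsum
        simpa [add_assoc] using hμsum
      set σ : ℝ := ∑ a, lam' a with hσ
      have hσ0 : 0 ≤ σ := Finset.sum_nonneg fun a _ => hlam'0 a
      rcases eq_or_lt_of_le hσ0 with hσeq | hσpos
      · -- σ = 0 : all lam' vanish, contradiction with hsnd & hmass
        have hall : ∀ a, lam' a = 0 := by
          intro a
          exact ((Finset.sum_eq_zero_iff_of_nonneg
            (s := Finset.univ) (fun a _ => hlam'0 a)).mp hσeq.symm) a (Finset.mem_univ a)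
        have : (∑ a, lam' a * (cost a - cost astar)) = 0 :=
          Finset.sum_eq_zero fun a _ => by rw [hall a, zero_mul]
        rw [this] at hsnd
        linarith [hσeq]
      · -- σ > 0 : normalize and contradict the vertex hypothesis
        set lam : A → ℝ := fun a => lam' a / σ with hlamdef
        have hlamstar0 : lam astar = 0 := by simp [hlamdef, hlam']
        have hlamsum : (∑ a, lam a) = 1 := by
          simp only [hlamdef]
          rw [← Finset.sum_div, ← hσ, div_self hσpos.ne']
        have hlampω : ∀ ω, ∑ a, lam a * pdist a ω = pdist astar ω := by
          intro ω
          have h := hfst ω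
          have hc : (∑ a, lam' a * pdist astar ω) = σ * pdist astar ω := by
            rw [← Finset.sum_mul, ← hσ]
          have h2 : (∑ a, lam' a * pdist a ω) = σ * pdist astar ω := by
            have hsub : (∑ a, (lam' a * pdist a ω - lam' a * pdist astar ω)) = 0 := by
              simpa [mul_sub] using h
            rw [Finset.sum_sub_distrib] at hsub
            linarith
          calc (∑ a, lam a * pdist a ω) = (∑ a, lam' a * pdist a ω) / σ := by
                rw [Finset.sum_div]
                exact Finset.sum_congr rfl fun a _ => by simp only [hlamdef]; ring
            _ = pdist astar ω := by rw [h2]; field_simp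
        have hlt := hvertex lam (fun a => div_nonneg (hlam'0 a) hσ0) hlamstar0 hlamsum hlampω
        have hdiv : (∑ a, lam a * cost a) = (∑ a, lam' a * cost a) / σ := by
          rw [Finset.sum_div]
          exact Finset.sum_congr rfl fun a _ => by simp only [hlamdef]; ring
        rw [hdiv] at hlt
        have hlt2 : σ * cost astar < ∑ a, lam' a * cost a := by
          have := (lt_div_iff₀ hσpos).mp hlt
          linarith
        have hexpand : (∑ a, lam' a * (cost a - cost astar))
            = (∑ a, lam' a * cost a) - σ * cost astar := by
          simp_rw [mul_sub]
          rw [Finset.sum_sub_distrib, ← Finset.sum_mul, ← hσ]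
        have hn1 := hμ0 none
        have hn2 := hμ0 (some astar)
        linarith
    -- separation
    have hScompact : IsCompact (convexHull ℝ (Set.range q)) :=
      (Set.finite_range q).isCompact_convexHull ℝ
    obtain ⟨f, u, hfu, hsep⟩ := geometric_hahn_banach_point_closed
      (convex_convexHull ℝ _) hScompact.isClosed hzero
    have hu : (0 : ℝ) < u := by simpa using hfu
    have hmem : ∀ i, q i ∈ convexHull ℝ (Set.range q) :=
      fun i => subset_convexHull ℝ _ (Set.mem_range_self i)
    set t : ℝ := f ((0 : Ω → ℝ), (1 : ℝ)) with ht
    have htpos : 0 < t := by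
      have := hsep _ (hmem none)
      rw [hq_none] at this
      linarith
    have key : ∀ (x : Ω → ℝ) (d : ℝ), f (x, d) = f (x, 0) + d * t := by
      intro x d
      have hxd : ((x, d) : (Ω → ℝ) × ℝ) = (x, 0) + d • ((0 : Ω → ℝ), (1 : ℝ)) := by
        simp [Prod.ext_iff]
      rw [hxd, map_add, map_smul, smul_eq_mul, ht]
    refine ⟨fun x => cost astar - (1 / t) * f (x - pdist astar, 0), ?_, ?_, ?_⟩
    · refine ⟨convex_convexHull ℝ _, ?_⟩
      intro x hx y hy a b ha hb hab
      have harg : ((a • x + b • y - pdist astar, (0 : ℝ)) : (Ω → ℝ) × ℝ)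
          = a • ((x - pdist astar, 0) : (Ω → ℝ) × ℝ) + b • ((y - pdist astar, 0) : (Ω → ℝ) × ℝ) := by
        rw [Prod.smul_mk, Prod.smul_mk, Prod.mk_add_mk]
        refine Prod.ext ?_ (by simp)
        rw [smul_sub, smul_sub, sub_add_sub_comm, ← add_smul, hab, one_smul]
      show cost astar - 1 / t * f (a • x + b • y - pdist astar, 0)
          ≤ a • (cost astar - 1 / t * f (x - pdist astar, 0))
            + b • (cost astar - 1 / t * f (y - pdist astar, 0))
      rw [harg, map_add, map_smul, map_smul, smul_eq_mul, smul_eq_mul,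
        smul_eq_mul, smul_eq_mul]
      have : a * (cost astar - 1 / t * f (x - pdist astar, 0))
          + b * (cost astar - 1 / t * f (y - pdist astar, 0))
          = (a + b) * cost astar
            - 1 / t * (a * f (x - pdist astar, 0) + b * f (y - pdist astar, 0)) := by ring
      rw [this, hab, one_mul]
    · simp [show ((0 : Ω → ℝ), (0 : ℝ)) = 0 from rfl]
    · intro a ha
      have hfa : 0 < f (pdist a - pdist astar, cost a - cost astar) := by
        have := hsep _ (hmem (some a))
        rw [hq_some a ha] at this
        linarith
      rw [key] at hfa
      have h1 : cost astar - 1 / t * f (pdist a - pdist astar, 0) - cost a < 0 := by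
        rw [show cost astar - 1 / t * f (pdist a - pdist astar, 0) - cost a
            = -(1 / t) * (f (pdist a - pdist astar, 0) + (cost a - cost astar) * t) by
          field_simp; ring]
        have : 0 < (1 / t) * (f (pdist a - pdist astar, 0) + (cost a - cost astar) * t) :=
          mul_pos (by positivity) hfa
        linarith
      simpa [show ((0 : Ω → ℝ), (0 : ℝ)) = 0 from rfl] using h1
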